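/- arXiv:2506.16864 — 3 statements merged into one kernel-verified Lean document; each statement's English description precedes it below -/
import Mathlib

section
/- Let A and B be connected simple graphs, each with at least two vertices, let f : V(A) → V(B) be a function, and let (a,b) be a vertex of the Sierpiński product A ⊗_f B. Then (a,b) is a separating vertex of A ⊗_f B if and only if at least one of the following holds: (i) a is a separating vertex of A, and there exists a partition H₁, H₂, …, Hₙ (n ≥ 2) of V(A) \ {a} such that whenever hᵢ ∈ Hᵢ and h' lies in the same connected component of A − a as hᵢ, then h' ∈ Hᵢ, and such that whenever hᵢ ∈ Hᵢ and hⱼ ∈ Hⱼ with i ≠ j are both neighbours of a in A, every path in B from f(hᵢ) to f(hⱼ) contains the vertex b; (ii) b is a separating vertex of B, and some connected component of B − b contains no vertex of the set {f(a') : a' a neighbour of a in A}; (iii) f(a') = b for every neighbour a' of a in A. -/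
/-- The Sierpiński product of simple graphs `A` and `B` with respect to `f : V(A) → V(B)`:
vertices are pairs `(a, b)`; two vertices are adjacent iff they lie in the same fibre and
their second coordinates are adjacent in `B`, or their first coordinates are adjacent in `A`
and the second coordinates are given by `f` applied to the other first coordinate. -/
def SierpinskiProd {α β : Type*} (A : SimpleGraph α) (B : SimpleGraph β)
    (f : α → β) : SimpleGraph (α × β) where
  Adj p q := (p.1 = q.1 ∧ B.Adj p.2 q.2) ∨
    (A.Adj p.1 q.1 ∧ p.2 = f q.1 ∧ q.2 = f p.1)
  symm := by
    constructor
    rintro ⟨a₁, b₁⟩ ⟨a₂, b₂⟩ (⟨h, hB⟩ | ⟨hA, h₁, h₂⟩)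
    · exact Or.inl ⟨h.symm, hB.symm⟩
    · exact Or.inr ⟨hA.symm, h₂, h₁⟩
  loopless := by
    constructor
    rintro ⟨a, b⟩ (⟨_, hB⟩ | ⟨hA, _, _⟩)
    · exact B.loopless.irrefl b hB
    · exact A.loopless.irrefl a hA

/-- A vertex `v` of a graph `G` is a separating vertex if deleting `v` (taking the induced
subgraph on the remaining vertices) yields a graph that is not connected. -/
def IsSeparatingVertex {V : Type*} (G : SimpleGraph V) (v : V) : Prop :=
  ¬ (G.induce ({v}ᶜ : Set V)).Connected

/-- A graph `G` is `k`-connected if it has more than `k` vertices and deleting any set of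
fewer than `k` vertices leaves a connected graph. -/
def KConnected {V : Type*} [Fintype V] (k : ℕ) (G : SimpleGraph V) : Prop :=
  k < Fintype.card V ∧ ∀ S : Set V, S.ncard < k → (G.induce Sᶜ).Connected

/-- `W` is a cut-set of `G` if deleting all vertices of `W` strictly increases the number of
connected components. -/
def IsCutSet {V : Type*} (G : SimpleGraph V) (W : Set V) : Prop :=
  Nat.card G.ConnectedComponent < Nat.card (G.induce Wᶜ).ConnectedComponent

/-- `W` is a minimal cut-set of `G` if it is a cut-set and no proper subset is a cut-set. -/
def IsMinCutSet {V : Type*} (G : SimpleGraph V) (W : Set V) : Prop :=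
  IsCutSet G W ∧ ∀ W' ⊂ W, ¬ IsCutSet G W'

open SimpleGraph

section Aux

variable {V : Type*} {G : SimpleGraph V}

private lemma mem_of_walk_closed {S : Set V} (hS : ∀ ⦃x y : V⦄, G.Adj x y → x ∈ S → y ∈ S)
    {u v : V} (w : G.Walk u v) (hu : u ∈ S) : v ∈ S := by
  induction w with
  | nil => exact hu
  | cons h _ ih => exact ih (hS h hu)

private lemma not_reachable_of_closed {S : Set V} (hS : ∀ ⦃x y : V⦄, G.Adj x y → x ∈ S → y ∈ S)
    {u v : V} (hu : u ∈ S) (hv : v ∉ S) : ¬ G.Reachable u v :=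
  fun h => h.elim fun w => hv (mem_of_walk_closed hS w hu)

end Aux

section Prod

variable {α β : Type*} (A : SimpleGraph α) (B : SimpleGraph β) (f : α → β) (a : α) (b : β)

private lemma mem_compl_pair {x : α} (hx : x ≠ a) (z : β) :
    ((x, z) : α × β) ∈ ({(a, b)}ᶜ : Set (α × β)) :=
  fun h => hx (congrArg Prod.fst h)

private lemma mem_compl_pair' {z : β} (hz : z ≠ b) (x : α) :
    ((x, z) : α × β) ∈ ({(a, b)}ᶜ : Set (α × β)) :=
  fun h => hz (congrArg Prod.snd h)

private lemma copy_reach {x : α} {y y' : β} (w : B.Walk y y')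
    (h : ∀ z ∈ w.support, ((x, z) : α × β) ∈ ({(a, b)}ᶜ : Set (α × β))) :
    ((SierpinskiProd A B f).induce ({(a, b)}ᶜ : Set (α × β))).Reachable
      ⟨(x, y), h y w.start_mem_support⟩ ⟨(x, y'), h y' w.end_mem_support⟩ := by
  induction w with
  | nil => exact Reachable.refl _
  | @cons u v _ hadj rest ih =>
      have h' : ∀ z ∈ rest.support, ((x, z) : α × β) ∈ ({(a, b)}ᶜ : Set (α × β)) :=
        fun z hz => h z (by simp [Walk.support_cons, hz])
      refine Reachable.trans (Adj.reachable ?_) (ih h')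
      exact Or.inl ⟨rfl, hadj⟩

private lemma copy_reach_ne (hB : B.Connected) {x : α} (hx : x ≠ a) (y y' : β) :
    ((SierpinskiProd A B f).induce ({(a, b)}ᶜ : Set (α × β))).Reachable
      ⟨(x, y), mem_compl_pair a b hx y⟩ ⟨(x, y'), mem_compl_pair a b hx y'⟩ := by
  obtain ⟨w⟩ := hB.preconnected y y'
  exact copy_reach A B f a b w (fun z _ => mem_compl_pair a b hx z)

private lemma copyA_reach {y y' : ({b}ᶜ : Set β)} (w : (B.induce ({b}ᶜ : Set β)).Walk y y') :
    ((SierpinskiProd A B f).induce ({(a, b)}ᶜ : Set (α × β))).Reachable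
      ⟨(a, (y : β)), mem_compl_pair' a b y.2 a⟩ ⟨(a, (y' : β)), mem_compl_pair' a b y'.2 a⟩ := by
  induction w with
  | nil => exact Reachable.refl _
  | @cons u v _ hadj rest ih =>
      refine Reachable.trans (Adj.reachable ?_) ih
      exact Or.inl ⟨rfl, hadj⟩

private lemma chunk_reach (hB : B.Connected) {x x' : ({a}ᶜ : Set α)}
    (w : (A.induce ({a}ᶜ : Set α)).Walk x x') (y y' : β) :
    ((SierpinskiProd A B f).induce ({(a, b)}ᶜ : Set (α × β))).Reachable
      ⟨((x : α), y), mem_compl_pair a b x.2 y⟩ ⟨((x' : α), y'), mem_compl_pair a b x'.2 y'⟩ := by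
  induction w generalizing y with
  | @nil u => exact copy_reach_ne A B f a b hB u.2 y y'
  | @cons u v _ hadj rest ih =>
      have h1 := copy_reach_ne A B f a b hB u.2 y (f (v : α))
      have h2 : ((SierpinskiProd A B f).induce ({(a, b)}ᶜ : Set (α × β))).Adj
          ⟨((u : α), f (v : α)), mem_compl_pair a b u.2 _⟩
          ⟨((v : α), f (u : α)), mem_compl_pair a b v.2 _⟩ :=
        Or.inr ⟨hadj, rfl, rfl⟩
      exact h1.trans (h2.reachable.trans (ih (f (u : α))))

end Prod

/-- **Theorem (separating vertices of Sierpiński products).**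
Let `A`, `B` be connected nontrivial graphs and `f : V(A) → V(B)`. Then `(a, b)` is a
separating vertex of `A ⊗_f B` iff (i) `a` is a separating vertex of `A` and there is a
partition `H₁, …, Hₙ` (`n ≥ 2`) of `V(A) \ {a}` into unions of connected components of
`A − a` such that for neighbours `hᵢ ∈ Hᵢ`, `hⱼ ∈ Hⱼ` of `a` with `i ≠ j`, the vertex `b`
lies on every `f(hᵢ)f(hⱼ)`-path in `B`; or (ii) `b` is a separating vertex of `B` and some
connected component of `B − b` avoids the set `{f(a') : a a' ∈ E(A)}`; or (iii) every
neighbour of `a` is mapped to `b` by `f`. -/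
theorem sierpinski_separating_vertex_iff {α β : Type*} [Fintype α] [Fintype β]
    (A : SimpleGraph α) (B : SimpleGraph β) (f : α → β)
    (hA : A.Connected) (hB : B.Connected)
    (hcardA : 2 ≤ Fintype.card α) (hcardB : 2 ≤ Fintype.card β)
    (a : α) (b : β) :
    IsSeparatingVertex (SierpinskiProd A B f) (a, b) ↔
      ((IsSeparatingVertex A a ∧
        ∃ n : ℕ, 2 ≤ n ∧ ∃ H : Fin n → Set α,
          (∀ i, (H i).Nonempty) ∧
          (∀ i j, i ≠ j → Disjoint (H i) (H j)) ∧
          (⋃ i, H i) = ({a}ᶜ : Set α) ∧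
          (∀ i : Fin n, ∀ h h' : ({a}ᶜ : Set α), (h : α) ∈ H i →
            (A.induce ({a}ᶜ : Set α)).Reachable h h' → (h' : α) ∈ H i) ∧
          (∀ i j : Fin n, i ≠ j → ∀ hi ∈ H i, ∀ hj ∈ H j,
            A.Adj a hi → A.Adj a hj →
            ∀ p : B.Walk (f hi) (f hj), p.IsPath → b ∈ p.support)) ∨
      (IsSeparatingVertex B b ∧
        ∃ J : (B.induce ({b}ᶜ : Set β)).ConnectedComponent,
          ∀ v : ({b}ᶜ : Set β), v ∈ J.supp → ∀ a', A.Adj a a' → f a' ≠ (v : β)) ∨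
      (∀ a', A.Adj a a' → f a' = b)) := by
  classical
  have hntα : Nontrivial α := Fintype.one_lt_card_iff_nontrivial.mp hcardA
  have hntβ : Nontrivial β := Fintype.one_lt_card_iff_nontrivial.mp hcardB
  obtain ⟨a', ha'⟩ := exists_ne a
  obtain ⟨b', hb'⟩ := exists_ne b
  constructor
  · intro hsep
    by_cases hiii : ∀ a', A.Adj a a' → f a' = b
    · exact Or.inr (Or.inr hiii)
    push_neg at hiii
    obtain ⟨a₀, ha₀, hfa₀⟩ := hiii
    by_cases hii : IsSeparatingVertex B b ∧
        ∃ J : (B.induce ({b}ᶜ : Set β)).ConnectedComponent,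
          ∀ v : ({b}ᶜ : Set β), v ∈ J.supp → ∀ a'', A.Adj a a'' → f a'' ≠ (v : β)
    · exact Or.inr (Or.inl hii)
    left
    have hit : ∀ q : ({b}ᶜ : Set β), ∃ a'', A.Adj a a'' ∧ ∃ hfb : f a'' ∈ ({b}ᶜ : Set β),
        (B.induce ({b}ᶜ : Set β)).Reachable q ⟨f a'', hfb⟩ := by
      intro q
      by_cases hsepB : IsSeparatingVertex B b
      · have hnot : ¬ ∃ J : (B.induce ({b}ᶜ : Set β)).ConnectedComponent,
            ∀ v : ({b}ᶜ : Set β), v ∈ J.supp → ∀ a'', A.Adj a a'' → f a'' ≠ (v : β) :=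
          fun hJ' => hii ⟨hsepB, hJ'⟩
        push_neg at hnot
        obtain ⟨v, hv, a'', ha'', hfv⟩ :=
          hnot ((B.induce ({b}ᶜ : Set β)).connectedComponentMk q)
        refine ⟨a'', ha'', by rw [hfv]; exact v.2, ?_⟩
        have hmk := (ConnectedComponent.mem_supp_iff _ _).mp hv
        have hvq : (⟨f a'', by rw [hfv]; exact v.2⟩ : ({b}ᶜ : Set β)) = v := Subtype.ext hfv
        rw [hvq]
        exact ((ConnectedComponent.eq).mp hmk).symm
      · have hconnB : (B.induce ({b}ᶜ : Set β)).Connected := not_not.mp hsepB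
        exact ⟨a₀, ha₀, Set.mem_compl_singleton_iff.mpr hfa₀,
          hconnB.preconnected q ⟨f a₀, Set.mem_compl_singleton_iff.mpr hfa₀⟩⟩
    haveI hFin : Fintype
        ((SierpinskiProd A B f).induce ({(a, b)}ᶜ : Set (α × β))).ConnectedComponent :=
      Fintype.ofFinite _
    have surj : ∀ c : ((SierpinskiProd A B f).induce
          ({(a, b)}ᶜ : Set (α × β))).ConnectedComponent,
        ∃ x : α, ∃ hx : x ≠ a,
          ((SierpinskiProd A B f).induce ({(a, b)}ᶜ : Set (α × β))).connectedComponentMk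
            ⟨(x, f a), mem_compl_pair a b hx (f a)⟩ = c := by
      intro c
      obtain ⟨⟨⟨p, q⟩, hpq⟩, rfl⟩ := c.exists_rep
      by_cases hp : p = a
      · subst p
        have hq : q ≠ b := fun h => hpq (by rw [h]; exact rfl)
        obtain ⟨a'', ha'', hfb, hre⟩ := hit ⟨q, hq⟩
        obtain ⟨w⟩ := hre
        have r1 := copyA_reach A B f a b w
        have r2 : ((SierpinskiProd A B f).induce ({(a, b)}ᶜ : Set (α × β))).Adj
            ⟨(a, f a''), mem_compl_pair' a b hfb a⟩
            ⟨(a'', f a), mem_compl_pair a b ha''.ne' (f a)⟩ :=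
          Or.inr ⟨ha'', rfl, rfl⟩
        exact ⟨a'', ha''.ne', ConnectedComponent.sound ((r1.trans r2.reachable)).symm⟩
      · obtain ⟨w⟩ := hB.preconnected q (f a)
        have r := copy_reach A B f a b w (fun z _ => mem_compl_pair a b hp z)
        exact ⟨p, hp, ConnectedComponent.sound r.symm⟩
    have hnt : Nontrivial ((SierpinskiProd A B f).induce
        ({(a, b)}ᶜ : Set (α × β))).ConnectedComponent := by
      have hne' : Nonempty (({(a, b)}ᶜ : Set (α × β))) :=
        ⟨⟨(a', b), mem_compl_pair a b ha' b⟩⟩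
      have hprec : ¬ ∀ u v : ({(a, b)}ᶜ : Set (α × β)),
          ((SierpinskiProd A B f).induce ({(a, b)}ᶜ : Set (α × β))).Reachable u v :=
        fun h => hsep ((connected_iff _).mpr ⟨h, hne'⟩)
      push_neg at hprec
      obtain ⟨u, v, huv⟩ := hprec
      exact ⟨((SierpinskiProd A B f).induce ({(a, b)}ᶜ : Set (α × β))).connectedComponentMk u,
        ((SierpinskiProd A B f).induce ({(a, b)}ᶜ : Set (α × β))).connectedComponentMk v,
        fun h => huv (ConnectedComponent.eq.mp h)⟩
    have hn2 : 2 ≤ Fintype.card ((SierpinskiProd A B f).induce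
        ({(a, b)}ᶜ : Set (α × β))).ConnectedComponent :=
      Fintype.one_lt_card_iff_nontrivial.mpr hnt
    set e := Fintype.equivFin ((SierpinskiProd A B f).induce
        ({(a, b)}ᶜ : Set (α × β))).ConnectedComponent with he
    refine ⟨?_, Fintype.card _, hn2, fun i => {x | ∃ hx : x ≠ a,
      e (((SierpinskiProd A B f).induce ({(a, b)}ᶜ : Set (α × β))).connectedComponentMk
        ⟨(x, f a), mem_compl_pair a b hx (f a)⟩) = i}, ?_, ?_, ?_, ?_, ?_⟩
    · -- a is separating
      intro hconnA
      have hss : ∀ c c' : ((SierpinskiProd A B f).induce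
          ({(a, b)}ᶜ : Set (α × β))).ConnectedComponent, c = c' := by
        intro c c'
        obtain ⟨x, hx, rfl⟩ := surj c
        obtain ⟨x', hx', rfl⟩ := surj c'
        obtain ⟨w⟩ := hconnA.preconnected ⟨x, hx⟩ ⟨x', hx'⟩
        exact ConnectedComponent.sound (chunk_reach A B f a b hB w (f a) (f a))
      obtain ⟨c, c', hcc⟩ := hnt
      exact hcc (hss c c')
    · -- nonempty
      intro i
      obtain ⟨x, hx, hc⟩ := surj (e.symm i)
      exact ⟨x, hx, by rw [hc, Equiv.apply_symm_apply]⟩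
    · -- disjoint
      intro i j hij
      rw [Set.disjoint_left]
      rintro x ⟨hx, hi⟩ ⟨hx', hj⟩
      exact hij (hi.symm.trans hj)
    · -- union
      ext x
      simp only [Set.mem_iUnion, Set.mem_compl_iff, Set.mem_singleton_iff, Set.mem_setOf_eq]
      constructor
      · rintro ⟨i, hx, -⟩; exact hx
      · intro hx
        exact ⟨e (((SierpinskiProd A B f).induce
          ({(a, b)}ᶜ : Set (α × β))).connectedComponentMk
          ⟨(x, f a), mem_compl_pair a b hx (f a)⟩), hx, rfl⟩
    · -- closed under components
      intro i h h' hh hre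
      obtain ⟨hx, hi⟩ := hh
      obtain ⟨w⟩ := hre
      refine ⟨Set.mem_compl_singleton_iff.mp h'.2, ?_⟩
      have h2 := (ConnectedComponent.sound (chunk_reach A B f a b hB w (f a) (f a))).symm
      exact (congrArg e h2).trans hi
    · -- path condition
      intro i j hij x hxmem y hymem hax hay p hp
      by_contra hbmem
      have hsupp : ∀ z ∈ p.support, ((a, z) : α × β) ∈ ({(a, b)}ᶜ : Set (α × β)) :=
        fun z hz => mem_compl_pair' a b (fun h => hbmem (h ▸ hz)) a
      have r0 := copy_reach A B f a b p hsupp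
      have e1 : ((SierpinskiProd A B f).induce ({(a, b)}ᶜ : Set (α × β))).Adj
          ⟨(x, f a), mem_compl_pair a b hax.ne' (f a)⟩
          ⟨(a, f x), hsupp (f x) p.start_mem_support⟩ :=
        Or.inr ⟨hax.symm, rfl, rfl⟩
      have e2 : ((SierpinskiProd A B f).induce ({(a, b)}ᶜ : Set (α × β))).Adj
          ⟨(a, f y), hsupp (f y) p.end_mem_support⟩
          ⟨(y, f a), mem_compl_pair a b hay.ne' (f a)⟩ :=
        Or.inr ⟨hay, rfl, rfl⟩
      have req := (e1.reachable.trans r0).trans e2.reachable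
      have hc := ConnectedComponent.sound req
      obtain ⟨hx1, hi1⟩ := hxmem
      obtain ⟨hy1, hj1⟩ := hymem
      exact hij (hi1.symm.trans ((congrArg e hc).trans hj1))
  · rintro (⟨hsepA, n, hn2, H, hHne, hHdisj, hHuni, hHclosed, hHpath⟩ | ⟨hsepB, J, hJ⟩ | hiii) <;>
      intro hconn
    · -- case (i)
      have hxa : ∀ i x, x ∈ H i → x ≠ a := by
        intro i x hx
        have hx' : x ∈ ({a}ᶜ : Set α) := hHuni ▸ Set.mem_iUnion.mpr ⟨i, hx⟩
        exact hx'
      have hi01 : (⟨0, by omega⟩ : Fin n) ≠ ⟨1, by omega⟩ := by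
        simp [Fin.ext_iff]
      set i₀ : Fin n := ⟨0, by omega⟩ with hi₀
      set i₁ : Fin n := ⟨1, by omega⟩ with hi₁
      obtain ⟨h₀, hh₀⟩ := hHne i₀
      obtain ⟨h₁, hh₁⟩ := hHne i₁
      set S : Set (({(a, b)}ᶜ : Set (α × β))) :=
        {w | (w : α × β).1 ∈ H i₀ ∨ ((w : α × β).1 = a ∧ ∃ h ∈ H i₀, A.Adj a h ∧
          ∃ p : B.Walk (w : α × β).2 (f h), b ∉ p.support)} with hSdef
      have hclosed : ∀ ⦃u w : ({(a, b)}ᶜ : Set (α × β))⦄,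
          ((SierpinskiProd A B f).induce ({(a, b)}ᶜ : Set (α × β))).Adj u w → u ∈ S → w ∈ S := by
        rintro ⟨⟨x₁, y₁⟩, hm₁⟩ ⟨⟨x₂, y₂⟩, hm₂⟩ hadj hu
        have hadj' : (SierpinskiProd A B f).Adj (x₁, y₁) (x₂, y₂) := hadj
        rcases hu with hu | ⟨hx₁a, h0, hh0, hadj0, p, hbp⟩
        · rcases hadj' with ⟨h1, hBadj⟩ | ⟨hAadj, h2, h3⟩
          · exact Or.inl (h1 ▸ hu)
          · simp only [] at hAadj h2 h3
            by_cases hx₂ : x₂ = a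
            · subst hx₂
              refine Or.inr ⟨rfl, x₁, hu, hAadj.symm,
                (Walk.nil : B.Walk (f x₁) (f x₁)).copy h3.symm rfl, ?_⟩
              have hy₂ : y₂ ≠ b := fun hyb => hm₂ (by rw [hyb]; exact rfl)
              simp only [Walk.support_copy, Walk.support_nil, List.mem_singleton]
              exact fun hc => hy₂ (h3.trans hc.symm)
            · have hx₁ : x₁ ≠ a := hxa i₀ x₁ hu
              exact Or.inl (hHclosed i₀ ⟨x₁, hx₁⟩ ⟨x₂, hx₂⟩ hu (Adj.reachable hAadj))
        · replace hx₁a : x₁ = a := hx₁a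
          rcases hadj' with ⟨h1, hBadj⟩ | ⟨hAadj, h2, h3⟩
          · have h1' : x₁ = x₂ := h1
            have hy₂ : y₂ ≠ b := fun hyb => hm₂ (by rw [hyb, ← h1', hx₁a]; exact rfl)
            refine Or.inr ⟨h1'.symm.trans hx₁a, h0, hh0, hadj0, Walk.cons hBadj.symm p, ?_⟩
            simp only [Walk.support_cons, List.mem_cons, not_or]
            exact ⟨fun h => hy₂ h.symm, hbp⟩
          · have hAadj0 : A.Adj x₁ x₂ := hAadj
            have hAadj' : A.Adj a x₂ := hx₁a ▸ hAadj0
            have hx₂ : x₂ ≠ a := hAadj'.ne'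
            have hx₂mem : x₂ ∈ ({a}ᶜ : Set α) := hx₂
            rw [← hHuni] at hx₂mem
            obtain ⟨j, hj⟩ := Set.mem_iUnion.mp hx₂mem
            by_cases hji : j = i₀
            · exact Or.inl (hji ▸ hj)
            · exfalso
              have hbp' : b ∉ (p.reverse.copy rfl h2).support := by
                simpa [Walk.support_copy, Walk.support_reverse, List.mem_reverse] using hbp
              have hbmem := hHpath i₀ j (Ne.symm hji) h0 hh0 x₂ hj hadj0 hAadj'
                (p.reverse.copy rfl h2).bypass (Walk.bypass_isPath _)
              exact hbp' (Walk.support_bypass_subset _ hbmem)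
      have hu : (⟨(h₀, f a), mem_compl_pair a b (hxa i₀ h₀ hh₀) (f a)⟩ :
          ({(a, b)}ᶜ : Set (α × β))) ∈ S := Or.inl hh₀
      have hv : (⟨(h₁, f a), mem_compl_pair a b (hxa i₁ h₁ hh₁) (f a)⟩ :
          ({(a, b)}ᶜ : Set (α × β))) ∉ S := by
        rintro (h | ⟨heq, -⟩)
        · exact Set.disjoint_left.mp (hHdisj i₀ i₁ hi01) h hh₁
        · exact hxa i₁ h₁ hh₁ heq
      exact absurd (hconn.preconnected _ _) (not_reachable_of_closed hclosed hu hv)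
    · -- case (ii)
      obtain ⟨⟨q, hq⟩, hqmk⟩ := J.exists_rep
      set S : Set (({(a, b)}ᶜ : Set (α × β))) :=
        {w | (w : α × β).1 = a ∧ ∃ h : (w : α × β).2 ≠ b,
          (B.induce ({b}ᶜ : Set β)).connectedComponentMk ⟨(w : α × β).2, h⟩ = J} with hSdef
      have hclosed : ∀ ⦃u w : ({(a, b)}ᶜ : Set (α × β))⦄,
          ((SierpinskiProd A B f).induce ({(a, b)}ᶜ : Set (α × β))).Adj u w → u ∈ S → w ∈ S := by
        rintro ⟨⟨x₁, y₁⟩, hm₁⟩ ⟨⟨x₂, y₂⟩, hm₂⟩ hadj ⟨hx₁, hy₁, hmk⟩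
        have hadj' : (SierpinskiProd A B f).Adj (x₁, y₁) (x₂, y₂) := hadj
        simp only [] at hx₁ hy₁ hmk
        subst hx₁
        rcases hadj' with ⟨h1, hBadj⟩ | ⟨hAadj, h2, h3⟩
        · simp only [] at h1 hBadj
          have hy₂ : y₂ ≠ b := fun hyb => hm₂ (by rw [← h1, hyb]; exact rfl)
          have hadjI : (B.induce ({b}ᶜ : Set β)).Adj ⟨y₂, hy₂⟩ ⟨y₁, hy₁⟩ := hBadj.symm
          exact ⟨h1.symm, hy₂, (ConnectedComponent.sound hadjI.reachable).trans hmk⟩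
        · exfalso
          simp only [] at hAadj h2 h3
          have hvsupp : (⟨y₁, hy₁⟩ : ({b}ᶜ : Set β)) ∈ J.supp :=
            (ConnectedComponent.mem_supp_iff _ _).mpr hmk
          exact hJ ⟨y₁, hy₁⟩ hvsupp x₂ hAadj h2.symm
      have hu : (⟨(a, q), mem_compl_pair' a b hq a⟩ : ({(a, b)}ᶜ : Set (α × β))) ∈ S :=
        ⟨rfl, hq, hqmk⟩
      have hv : (⟨(a', b), mem_compl_pair a b ha' b⟩ : ({(a, b)}ᶜ : Set (α × β))) ∉ S := by
        rintro ⟨h, -⟩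
        exact ha' h
      exact absurd (hconn.preconnected _ _) (not_reachable_of_closed hclosed hu hv)
    · -- case (iii)
      set S : Set (({(a, b)}ᶜ : Set (α × β))) := {w | (w : α × β).1 = a} with hSdef
      have hclosed : ∀ ⦃u w : ({(a, b)}ᶜ : Set (α × β))⦄,
          ((SierpinskiProd A B f).induce ({(a, b)}ᶜ : Set (α × β))).Adj u w → u ∈ S → w ∈ S := by
        rintro ⟨⟨x₁, y₁⟩, hm₁⟩ ⟨⟨x₂, y₂⟩, hm₂⟩ hadj hx₁
        have hadj' : (SierpinskiProd A B f).Adj (x₁, y₁) (x₂, y₂) := hadj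
        replace hx₁ : x₁ = a := hx₁
        subst hx₁
        rcases hadj' with ⟨h1, hBadj⟩ | ⟨hAadj, h2, h3⟩
        · exact h1.symm
        · exfalso
          simp only [] at hAadj h2 h3
          exact hm₁ (by rw [h2, hiii x₂ hAadj]; exact rfl)
      have hu : (⟨(a, b'), mem_compl_pair' a b hb' a⟩ : ({(a, b)}ᶜ : Set (α × β))) ∈ S := rfl
      have hv : (⟨(a', b), mem_compl_pair a b ha' b⟩ : ({(a, b)}ᶜ : Set (α × β))) ∉ S := ha'
      exact absurd (hconn.preconnected _ _) (not_reachable_of_closed hclosed hu hv)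
end

section
/- Let K₄ be the complete graph on four vertices with V(K₄) = {a₁,a₂,a₃,a₄}, let B be a connected simple graph with at least three vertices, and let f : V(K₄) → V(B) be a function such that the Sierpiński product K₄ ⊗_f B is 3-connected. If {b',b''} is a cut-set of B consisting of two distinct vertices, then the graph B − b' − b'' has exactly two connected components, and each of these components contains exactly two of the four vertices f(a₁), f(a₂), f(a₃), f(a₄). -/
set_option maxRecDepth 8000 in
/-- **Proposition (part).** If `K₄ ⊗_f B` is `3`-connected (`B` connected, at least three
vertices) and `{b', b''}` is a `2`-element cut-set of `B`, then `B − b' − b''` has exactly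
two connected components, each containing exactly two of `f(a₁), f(a₂), f(a₃), f(a₄)`. -/
theorem sierpinski_K4_two_cut {β : Type*} [Fintype β]
    (B : SimpleGraph β) (hB : B.Connected) (hcardB : 3 ≤ Fintype.card β)
    (f : Fin 4 → β)
    (h3 : KConnected 3 (SierpinskiProd (SimpleGraph.completeGraph (Fin 4)) B f))
    (b' b'' : β) (hne : b' ≠ b'') (hcut : IsCutSet B {b', b''}) :
    Nat.card (B.induce ({b', b''}ᶜ : Set β)).ConnectedComponent = 2 ∧
    ∀ C : (B.induce ({b', b''}ᶜ : Set β)).ConnectedComponent,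
      ({i : Fin 4 | ∃ h : f i ∈ ({b', b''}ᶜ : Set β),
        (B.induce ({b', b''}ᶜ : Set β)).connectedComponentMk ⟨f i, h⟩ = C}).ncard = 2 := by
    classical
  set s : Set β := {b', b''}ᶜ with hs
  set B' : SimpleGraph s := B.induce s with hB'def
  set G : SimpleGraph (Fin 4 × β) := SierpinskiProd (SimpleGraph.completeGraph (Fin 4)) B f with hG
  -- Key lemma: for every i and component C there is j ≠ i with f j in C.
  have key : ∀ (i : Fin 4) (C : B'.ConnectedComponent),
      ∃ j : Fin 4, j ≠ i ∧ ∃ h : f j ∈ s, B'.connectedComponentMk ⟨f j, h⟩ = C := by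
    intro i C
    obtain ⟨⟨c, hc⟩, hcC⟩ := C.exists_rep
    have hc' : c ≠ b' ∧ c ≠ b'' := by
      simpa [hs, Set.mem_compl_iff] using hc
    set S : Set (Fin 4 × β) := {(i, b'), (i, b'')} with hS
    have hS2 : S.ncard < 3 := by
      have : S.ncard ≤ 2 :=
        (Set.ncard_insert_le _ _).trans (by simp)
      omega
    have hconn := h3.2 S hS2
    obtain ⟨j0, hj0⟩ := exists_ne i
    have hu : ((i, c) : Fin 4 × β) ∈ Sᶜ := by
      simp only [hS, Set.mem_compl_iff, Set.mem_insert_iff, Set.mem_singleton_iff,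
        Prod.mk.injEq, not_or]
      exact ⟨fun h => hc'.1 h.2, fun h => hc'.2 h.2⟩
    have hv : ((j0, b') : Fin 4 × β) ∈ Sᶜ := by
      simp only [hS, Set.mem_compl_iff, Set.mem_insert_iff, Set.mem_singleton_iff,
        Prod.mk.injEq, not_or]
      exact ⟨fun h => hj0 h.1, fun h => hj0 h.1⟩
    obtain ⟨p⟩ := hconn ⟨(i, c), hu⟩ ⟨(j0, b'), hv⟩
    -- walk induction
    have main : ∀ (u v : ↥Sᶜ), (G.induce Sᶜ).Walk u v →
        u.val.1 = i → (∃ h : u.val.2 ∈ s, B'.connectedComponentMk ⟨u.val.2, h⟩ = C) →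
        v.val.1 ≠ i →
        ∃ j : Fin 4, j ≠ i ∧ ∃ h : f j ∈ s, B'.connectedComponentMk ⟨f j, h⟩ = C := by
      intro u v p
      induction p with
      | nil => intro h1 _ h3'; exact absurd h1 h3'
      | @cons u w v ha p ih =>
        intro h1 h2 h3'
        have ha' : G.Adj u.val w.val := ha
        rw [hG] at ha'
        rcases ha' with ⟨heq, hBadj⟩ | ⟨_, huw1, huw2⟩
        · -- stays in copy i
          have hw1 : w.val.1 = i := heq ▸ h1
          have hwS := w.property
          have hw2 : w.val.2 ∈ s := by
            simp only [hS, Set.mem_compl_iff, Set.mem_insert_iff, Set.mem_singleton_iff,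
              not_or] at hwS
            simp only [hs, Set.mem_compl_iff, Set.mem_insert_iff, Set.mem_singleton_iff, not_or]
            constructor
            · intro h; exact hwS.1 (by rw [← hw1, ← h])
            · intro h; exact hwS.2 (by rw [← hw1, ← h])
          obtain ⟨hu2, huC⟩ := h2
          have hadjB' : B'.Adj ⟨u.val.2, hu2⟩ ⟨w.val.2, hw2⟩ := hBadj
          refine ih hw1 ⟨hw2, ?_⟩ h3'
          rw [← huC]
          exact (SimpleGraph.ConnectedComponent.connectedComponentMk_eq_of_adj hadjB').symm
        · -- jumps to another copy
          rename_i hKadj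
          have hne' : u.val.1 ≠ w.val.1 := hKadj
          obtain ⟨hu2, huC⟩ := h2
          refine ⟨w.val.1, ?_, ?_⟩
          · rw [← h1]; intro h; exact hne' h.symm
          · have hu2' : f w.val.1 ∈ s := huw1 ▸ hu2
            refine ⟨hu2', ?_⟩
            rw [← huC]
            exact congrArg _ (Subtype.ext huw1.symm)
    have hjne : ((j0, b') : Fin 4 × β).1 ≠ i := hj0
    exact main _ _ p rfl ⟨hc, hcC⟩ hjne
  -- counting
  have hβne : Nonempty β := ⟨b'⟩
  have hone : Nat.card B.ConnectedComponent = 1 := by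
    rw [Nat.card_eq_one_iff_unique]
    constructor
    · constructor
      intro C D
      obtain ⟨c, rfl⟩ := C.exists_rep
      obtain ⟨d, rfl⟩ := D.exists_rep
      exact SimpleGraph.ConnectedComponent.sound (hB.preconnected c d)
    · exact ⟨B.connectedComponentMk (Classical.arbitrary β)⟩
  have hk2 : 2 ≤ Nat.card B'.ConnectedComponent := by
    have h := hcut
    rw [IsCutSet, hone] at h
    exact h
  have hfinΓ : Finite B'.ConnectedComponent :=
    Finite.of_surjective B'.connectedComponentMk (fun C => C.exists_rep)
  have hfΓ : Fintype B'.ConnectedComponent := Fintype.ofFinite _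
  set t : B'.ConnectedComponent → Finset (Fin 4) := fun C =>
    Finset.univ.filter (fun i => ∃ h : f i ∈ s, B'.connectedComponentMk ⟨f i, h⟩ = C) with ht
  have hTt : ∀ C, ({i : Fin 4 | ∃ h : f i ∈ s, B'.connectedComponentMk ⟨f i, h⟩ = C} : Set (Fin 4))
      = ↑(t C) := by
    intro C; ext i; simp only [ht, Set.mem_setOf_eq, Finset.coe_filter, Finset.mem_univ, true_and]
  have ht2 : ∀ C, 2 ≤ (t C).card := by
    intro C
    obtain ⟨j1, _, hj1⟩ := key 0 C
    obtain ⟨j2, hj21, hj2⟩ := key j1 C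
    have h1 : j1 ∈ t C := by simp only [ht, Finset.mem_filter, Finset.mem_univ, true_and]; exact hj1
    have h2 : j2 ∈ t C := by simp only [ht, Finset.mem_filter, Finset.mem_univ, true_and]; exact hj2
    have : ({j2, j1} : Finset (Fin 4)) ⊆ t C := by
      intro x hx; simp at hx; rcases hx with rfl | rfl <;> assumption
    calc 2 = ({j2, j1} : Finset (Fin 4)).card := (Finset.card_pair hj21).symm
    _ ≤ (t C).card := Finset.card_le_card this
  have hdisj : ∀ C ∈ Finset.univ, ∀ D ∈ Finset.univ, C ≠ D →
      Disjoint (t C) (t D) := by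
    intro C _ D _ hCD
    rw [Finset.disjoint_left]
    intro i hiC hiD
    simp only [ht, Finset.mem_filter] at hiC hiD
    obtain ⟨_, h, hC⟩ := hiC
    obtain ⟨_, h', hD⟩ := hiD
    exact hCD (hC ▸ hD ▸ rfl)
  have hsum : ∑ C : B'.ConnectedComponent, (t C).card ≤ 4 := by
    rw [← Finset.card_biUnion hdisj]
    calc (Finset.univ.biUnion t).card ≤ (Finset.univ : Finset (Fin 4)).card :=
        Finset.card_le_card (Finset.subset_univ _)
    _ = 4 := by simp
  have hlow : 2 * Fintype.card B'.ConnectedComponent ≤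
      ∑ C : B'.ConnectedComponent, (t C).card := by
    calc 2 * Fintype.card B'.ConnectedComponent
        = ∑ _C : B'.ConnectedComponent, 2 := by
          simp [Finset.sum_const, Finset.card_univ, mul_comm]
    _ ≤ ∑ C : B'.ConnectedComponent, (t C).card := Finset.sum_le_sum (fun C _ => ht2 C)
  have hkcard : Nat.card B'.ConnectedComponent = Fintype.card B'.ConnectedComponent :=
    Nat.card_eq_fintype_card
  have hk : Fintype.card B'.ConnectedComponent = 2 := by omega
  refine ⟨by rw [hkcard, hk], ?_⟩
  intro C
  rw [hTt C, Set.ncard_coe_finset]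
  -- t C card = 2
  have hsplit : (t C).card + ∑ D ∈ Finset.univ.erase C, (t D).card
      = ∑ D : B'.ConnectedComponent, (t D).card := by
    exact Finset.add_sum_erase Finset.univ (fun D => (t D).card) (Finset.mem_univ C)
  have herase : 2 * (Finset.univ.erase C).card ≤ ∑ D ∈ Finset.univ.erase C, (t D).card := by
    calc 2 * (Finset.univ.erase C).card = ∑ _D ∈ Finset.univ.erase C, 2 := by
          simp [Finset.sum_const, mul_comm]
    _ ≤ _ := Finset.sum_le_sum (fun D _ => ht2 D)
  have hec : (Finset.univ.erase C).card = 1 := by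
    rw [Finset.card_erase_of_mem (Finset.mem_univ C), Finset.card_univ, hk]
  have := ht2 C
  omega
end

section
/- Let A be a connected simple graph equipped with a colouring c : V(A) → {1,2,3} of its vertices by three colours such that every vertex of A has exactly one neighbour of each of the three colours (in particular A is 3-regular). Then A is 2-connected. -/
open SimpleGraph

/-- Handshake-style lemma: if `x` has odd degree and every vertex other than `x` and `y`
has even degree, then `x` and `y` are connected. -/
lemma aux_reachable_of_parity {α : Type*} [Fintype α] (B : SimpleGraph α)
    [DecidableRel B.Adj] {x y : α} (hodd : Odd (B.degree x))
    (heven : ∀ a, a ≠ x → a ≠ y → Even (B.degree a)) :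
    B.Reachable x y := by
  classical
  by_contra hreach
  let B' : SimpleGraph α :=
    { Adj := fun a b => B.Adj a b ∧ B.Reachable x a ∧ B.Reachable x b
      symm := ⟨fun a b ⟨h1, h2, h3⟩ => ⟨h1.symm, h3, h2⟩⟩
      loopless := ⟨fun a h => B.loopless.irrefl a h.1⟩ }
  letI : DecidableRel B'.Adj := Classical.decRel _
  have hdeg1 : ∀ a, B.Reachable x a → B'.degree a = B.degree a := by
    intro a ha
    unfold SimpleGraph.degree
    congr 1
    ext b
    simp only [mem_neighborFinset]
    constructor
    · exact fun h => h.1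
    · exact fun h => ⟨h, ha, ha.trans h.reachable⟩
  have hdeg0 : ∀ a, ¬ B.Reachable x a → B'.degree a = 0 := by
    intro a ha
    unfold SimpleGraph.degree
    rw [Finset.card_eq_zero, Finset.eq_empty_iff_forall_notMem]
    intro b hb
    rw [mem_neighborFinset] at hb
    exact ha hb.2.1
  have hodd' : ∀ a, Odd (B'.degree a) ↔ a = x := by
    intro a
    constructor
    · intro h
      by_contra hax
      by_cases hr : B.Reachable x a
      · rw [hdeg1 a hr] at h
        have hay : a ≠ y := by rintro rfl; exact hreach hr
        exact (Nat.not_odd_iff_even.mpr (heven a hax hay)) h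
      · rw [hdeg0 a hr] at h; simp at h
    · rintro rfl
      rw [hdeg1 _ (Reachable.refl _)]
      exact hodd
  have := B'.even_card_odd_degree_vertices
  have hset : ({a | Odd (B'.degree a)} : Finset α) = {x} := by
    ext a
    simp [hodd' a]
  rw [hset] at this
  simp at this

lemma aux_reach_induce {α : Type*} {G B : SimpleGraph α} {v : α}
    (h : ∀ a b, B.Adj a b → G.Adj a b ∧ a ≠ v ∧ b ≠ v) :
    ∀ {p q : α}, B.Walk p q → ∀ (hp : p ∈ ({v} : Set α)ᶜ) (hq : q ∈ ({v} : Set α)ᶜ),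
      (G.induce ({v} : Set α)ᶜ).Reachable ⟨p, hp⟩ ⟨q, hq⟩ := by
  intro p q w
  induction w with
  | nil => intro hp hq; exact Reachable.refl _
  | @cons p b q had w ih =>
    intro hp hq
    obtain ⟨hG, hpv, hbv⟩ := h _ _ had
    have hb : b ∈ ({v} : Set α)ᶜ := Set.mem_compl_singleton_iff.mpr hbv
    have step : (G.induce ({v} : Set α)ᶜ).Adj ⟨p, hp⟩ ⟨b, hb⟩ := hG
    exact step.reachable.trans (ih hb hq)

/-- Key lemma: the two neighbours of `v` of colours `c v` and `j` are joined avoiding `v`,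
using the 2-regular union of the colour matchings on classes `c v` and `j`. -/
lemma aux_key {α : Type*} [Fintype α] (A : SimpleGraph α) (c : α → Fin 3)
    (f : Fin 3 → α → α) (hadj : ∀ i a, A.Adj a (f i a)) (hcol : ∀ i a, c (f i a) = i)
    (huniq : ∀ i a b, A.Adj a b → c b = i → b = f i a)
    (v : α) (j : Fin 3) (hj : j ≠ c v) :
    (A.induce ({v} : Set α)ᶜ).Reachable
      ⟨f (c v) v, Set.mem_compl_singleton_iff.mpr (hadj (c v) v).ne'⟩
      ⟨f j v, Set.mem_compl_singleton_iff.mpr (hadj j v).ne'⟩ := by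
  classical
  set x := f (c v) v with hxdef
  set y := f j v with hydef
  have hcx : c x = c v := hcol (c v) v
  have hcy : c y = j := hcol j v
  -- the union of the two matchings, with v deleted
  let B : SimpleGraph α :=
    { Adj := fun a b => A.Adj a b ∧ (c a = c v ∨ c a = j) ∧ (c b = c v ∨ c b = j)
        ∧ a ≠ v ∧ b ≠ v
      symm := ⟨fun a b ⟨h1, h2, h3, h4, h5⟩ => ⟨h1.symm, h3, h2, h5, h4⟩⟩
      loopless := ⟨fun a h => A.loopless.irrefl a h.1⟩ }
  letI : DecidableRel B.Adj := Classical.decRel _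
  -- any neighbour of v is x or y if appropriately coloured
  have hnbrv : ∀ a, A.Adj a v → (c a = c v ∨ c a = j) → a = x ∨ a = y := by
    intro a ha hca
    rcases hca with h | h
    · exact Or.inl (huniq (c v) v a ha.symm h)
    · exact Or.inr (huniq j v a ha.symm h)
  -- neighbours in B of a suitable vertex a ∉ {v, x, y}
  have hNS : ∀ a, a ≠ v → a ≠ x → a ≠ y → (c a = c v ∨ c a = j) →
      B.neighborFinset a = {f (c v) a, f j a} := by
    intro a hav hax hay hca
    ext b
    simp only [mem_neighborFinset, Finset.mem_insert, Finset.mem_singleton]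
    constructor
    · rintro ⟨h1, _, h3, _, _⟩
      rcases h3 with h | h
      · exact Or.inl (huniq (c v) a b h1 h)
      · exact Or.inr (huniq j a b h1 h)
    · have hfv : ∀ i : Fin 3, f i a ≠ v := by
        intro i hiv
        have hAv : A.Adj a v := hiv ▸ hadj i a
        rcases hnbrv a hAv hca with h | h
        · exact hax h
        · exact hay h
      rintro (rfl | rfl)
      · exact ⟨hadj _ a, hca, Or.inl (hcol _ a), hav, hfv _⟩
      · exact ⟨hadj _ a, hca, Or.inr (hcol _ a), hav, hfv _⟩
  have hfxv : f (c v) x = v := (huniq (c v) x v (hadj (c v) v).symm rfl).symm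
  have hNx : B.neighborFinset x = {f j x} := by
    ext b
    simp only [mem_neighborFinset, Finset.mem_singleton]
    constructor
    · rintro ⟨h1, _, h3, _, hbv⟩
      rcases h3 with h | h
      · exact absurd ((huniq (c v) x b h1 (h.trans hcx.symm ▸ h)).trans hfxv) hbv
      · exact huniq j x b h1 h
    · rintro rfl
      refine ⟨hadj j x, Or.inl hcx, Or.inr (hcol j x), (hadj (c v) v).ne', ?_⟩
      intro hfv
      exact hj (by rw [← hcol j x, hfv])
  have hdegx : Odd (B.degree x) := by
    unfold SimpleGraph.degree
    rw [hNx]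
    simp
  have hdeg_even : ∀ a, a ≠ x → a ≠ y → Even (B.degree a) := by
    intro a hax hay
    by_cases hav : a = v
    · have hE : B.neighborFinset a = ∅ := by
        rw [Finset.eq_empty_iff_forall_notMem]
        intro b hb
        rw [mem_neighborFinset] at hb
        exact hb.2.2.2.1 hav
      unfold SimpleGraph.degree
      rw [hE]
      simp
    · by_cases hca : c a = c v ∨ c a = j
      · have h2 := hNS a hav hax hay hca
        have hne : f (c v) a ≠ f j a := by
          intro h
          exact hj (by rw [← hcol j a, ← h, hcol (c v) a])
        unfold SimpleGraph.degree
        rw [h2, Finset.card_pair hne]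
        exact even_two
      · have hE : B.neighborFinset a = ∅ := by
          rw [Finset.eq_empty_iff_forall_notMem]
          intro b hb
          rw [mem_neighborFinset] at hb
          exact hca hb.2.1
        unfold SimpleGraph.degree
        rw [hE]
        simp
  have hreach : B.Reachable x y := aux_reachable_of_parity B hdegx hdeg_even
  obtain ⟨w⟩ := hreach
  exact aux_reach_induce (B := B) (fun a b hb => ⟨hb.1, hb.2.2.2.1, hb.2.2.2.2⟩) w _ _


/-- **Lemma.** Let `A` be a connected graph whose vertices are coloured with three colours
so that every vertex has exactly one neighbour of each colour. Then `A` is `2`-connected. -/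
theorem three_coloured_cubic_two_connected {α : Type*} [Fintype α]
    (A : SimpleGraph α) (hA : A.Connected)
    (c : α → Fin 3)
    (hc : ∀ a : α, ∀ i : Fin 3, ∃! a', A.Adj a a' ∧ c a' = i) :
    KConnected 2 A := by
  classical
  have hc' : ∀ a i, ∃ a', (A.Adj a a' ∧ c a' = i) ∧ ∀ y, (A.Adj a y ∧ c y = i) → y = a' :=
    fun a i => hc a i
  choose F hF hU using hc'
  set f : Fin 3 → α → α := fun i a => F a i with hfdef
  have hadj : ∀ i a, A.Adj a (f i a) := fun i a => (hF a i).1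
  have hcol : ∀ i a, c (f i a) = i := fun i a => (hF a i).2
  have huniq : ∀ i a b, A.Adj a b → c b = i → b = f i a := fun i a b h1 h2 => hU a i b ⟨h1, h2⟩
  obtain ⟨v₀⟩ := hA.nonempty
  constructor
  · -- more than 2 vertices
    have hne0 : f 0 v₀ ≠ v₀ := (hadj 0 v₀).ne'
    have hne1 : f 1 v₀ ≠ v₀ := (hadj 1 v₀).ne'
    have hne01 : f 0 v₀ ≠ f 1 v₀ := by
      intro h
      have h0 := hcol 0 v₀
      rw [h, hcol 1 v₀] at h0
      exact absurd h0 (by decide)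
    have h3 : ({v₀, f 0 v₀, f 1 v₀} : Finset α).card = 3 :=
      Finset.card_eq_three.mpr ⟨v₀, f 0 v₀, f 1 v₀, hne0.symm, hne1.symm, hne01, rfl⟩
    calc (2 : ℕ) < 3 := by norm_num
      _ = _ := h3.symm
      _ ≤ Fintype.card α := Finset.card_le_univ _
  · intro S hS
    rcases (by omega : S.ncard = 0 ∨ S.ncard = 1) with hS1 | hS1
    · have hSe : S = ∅ := (Set.ncard_eq_zero S.toFinite).mp hS1
      subst hSe
      rw [Set.compl_empty]
      exact (induceUnivIso A).connected_iff.mpr hA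
    · obtain ⟨v, rfl⟩ := Set.ncard_eq_one.mp hS1
      -- reachability to the distinguished neighbour f (c v) v
      have hmemx : f (c v) v ∈ ({v} : Set α)ᶜ :=
        Set.mem_compl_singleton_iff.mpr (hadj (c v) v).ne'
      have hnbr : ∀ u, A.Adj v u → ∀ hu : u ∈ ({v} : Set α)ᶜ,
          (A.induce ({v} : Set α)ᶜ).Reachable ⟨f (c v) v, hmemx⟩ ⟨u, hu⟩ := by
        intro u hvu hu
        have hufv : u = f (c u) v := huniq (c u) v u hvu rfl
        by_cases hcu : c u = c v
        · have : (⟨u, hu⟩ : ↥(({v} : Set α)ᶜ)) = ⟨f (c v) v, hmemx⟩ :=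
            Subtype.ext (show u = f (c v) v by rw [← hcu]; exact hufv)
          rw [this]
        · have hk := aux_key A c f hadj hcol huniq v (c u) hcu
          have : (⟨f (c u) v, Set.mem_compl_singleton_iff.mpr (hadj (c u) v).ne'⟩ :
              ↥(({v} : Set α)ᶜ)) = ⟨u, hu⟩ := Subtype.ext hufv.symm
          rw [this] at hk
          exact hk
      have hpair : ∀ u₁ u₂, A.Adj v u₁ → A.Adj v u₂ →
          ∀ (h₁ : u₁ ∈ ({v} : Set α)ᶜ) (h₂ : u₂ ∈ ({v} : Set α)ᶜ),
          (A.induce ({v} : Set α)ᶜ).Reachable ⟨u₁, h₁⟩ ⟨u₂, h₂⟩ := by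
        intro u₁ u₂ hv1 hv2 h₁ h₂
        exact (hnbr u₁ hv1 h₁).symm.trans (hnbr u₂ hv2 h₂)
      have key : ∀ n (a b : α) (w : A.Walk a b) (ha : a ∈ ({v} : Set α)ᶜ)
          (hb : b ∈ ({v} : Set α)ᶜ), w.length ≤ n →
          (A.induce ({v} : Set α)ᶜ).Reachable ⟨a, ha⟩ ⟨b, hb⟩ := by
        intro n
        induction n with
        | zero =>
          intro a b w ha hb hlen
          have hab : a = b := w.eq_of_length_eq_zero (Nat.le_zero.mp hlen)
          subst hab
          exact Reachable.refl _
        | succ n ih =>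
          intro a b w ha hb hlen
          cases w with
          | nil => exact Reachable.refl _
          | @cons _ a₁ _ hstep p =>
            by_cases h1 : a₁ = v
            · cases p with
              | nil => exact absurd h1 (Set.mem_compl_singleton_iff.mp hb)
              | @cons _ a₂ _ h' p' =>
                have hva2 : A.Adj v a₂ := h1 ▸ h'
                have hva : A.Adj v a := h1 ▸ hstep.symm
                have ha2 : a₂ ∈ ({v} : Set α)ᶜ :=
                  Set.mem_compl_singleton_iff.mpr hva2.ne'
                have r1 := hpair a a₂ hva hva2 ha ha2
                refine r1.trans (ih a₂ b p' ha2 hb ?_)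
                simp only [Walk.length_cons] at hlen
                omega
            · have ha1 : a₁ ∈ ({v} : Set α)ᶜ := Set.mem_compl_singleton_iff.mpr h1
              have step : (A.induce ({v} : Set α)ᶜ).Adj ⟨a, ha⟩ ⟨a₁, ha1⟩ := hstep
              refine step.reachable.trans (ih a₁ b p ha1 hb ?_)
              simp only [Walk.length_cons] at hlen
              omega
      rw [connected_iff]
      refine ⟨?_, ⟨⟨f (c v) v, hmemx⟩⟩⟩
      rintro ⟨a, ha⟩ ⟨b, hb⟩
      obtain ⟨w⟩ := hA.preconnected a b
      exact key w.length a b w ha hb le_rfl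
end
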